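/- Let |ψ⟩ = (1/√2)(|0⟩^{⊗n}|0⟩^{⊗n} + |Φ_2⟩^{⊗n}) ∈ (ℂ²)^{⊗n} ⊗ (ℂ²)^{⊗n}, where |Φ_2⟩ = (1/√2)(|00⟩+|11⟩) and the bipartition puts the first tensor factor of each Φ_2 on side A. Then the reduced density operator ψ_A = Tr_B |ψ⟩⟨ψ| has largest eigenvalue λ_1 = (1/2)(1 + 2^{-n/2})² and rank 2^n; hence its entanglement spread log(rank · λ_1) is at least n − 1. -/

import Mathlib

open Matrix
/-- For `|ψ⟩ = (1/√2)(|0⟩^{⊗n}|0⟩^{⊗n} + |Φ₂⟩^{⊗n})`, whose coefficient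
matrix (A-side indexed by bit strings) is `M x y = (1/√2)(δ_{x,0}δ_{y,0} + 2^{-n/2}δ_{x,y})`,
the reduced state `ψ_A = M Mᴴ` has largest eigenvalue `(1/2)(1+2^{-n/2})²`, rank `2^n`,
and entanglement spread `log₂(2^n · λ₁) ≥ n − 1`. -/
theorem stmt_4 (n : ℕ) :
    let s : ℝ := ((Real.sqrt 2)⁻¹) ^ n   -- s = 2^{-n/2}
    let M : Matrix (Fin n → Bool) (Fin n → Bool) ℂ := Matrix.of fun x y =>
      (((Real.sqrt 2)⁻¹ : ℝ) : ℂ) *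
        ((if x = (fun _ => false) ∧ y = (fun _ => false) then 1 else 0)
          + (s : ℂ) * (if x = y then 1 else 0))
    (⨆ i, (Matrix.isHermitian_mul_conjTranspose_self M).eigenvalues i)
        = (1 / 2) * (1 + s) ^ 2 ∧
      (M * Mᴴ).rank = 2 ^ n ∧
      (n : ℝ) - 1 ≤ Real.logb 2 ((2 ^ n : ℝ) * ((1 / 2) * (1 + s) ^ 2)) := by
  intro s M
  have hs0 : 0 < s := pow_pos (inv_pos.mpr (Real.sqrt_pos.mpr two_pos)) n
  have hc2 : ((Real.sqrt 2)⁻¹ : ℝ) ^ 2 = 1 / 2 := by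
    rw [inv_pow, Real.sq_sqrt (by norm_num : (0:ℝ) ≤ 2)]
    norm_num
  have hc0 : (0:ℝ) < (Real.sqrt 2)⁻¹ := inv_pos.mpr (Real.sqrt_pos.mpr two_pos)
  set f0 : Fin n → Bool := fun _ => false with hf0
  set d : (Fin n → Bool) → ℝ := fun x =>
    if x = f0 then (Real.sqrt 2)⁻¹ * (1 + s) else (Real.sqrt 2)⁻¹ * s with hd
  have hM : M = Matrix.diagonal (fun x => ((d x : ℝ) : ℂ)) := by
    ext x y
    simp only [M, Matrix.of_apply, Matrix.diagonal_apply, hd]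
    by_cases hxy : x = y
    · subst hxy
      by_cases hx : x = f0 <;> simp [hx, ← hf0] <;> push_cast <;> ring
    · have h1 : ¬(x = f0 ∧ y = f0) := by rintro ⟨rfl, rfl⟩; exact hxy rfl
      simp [hxy, h1, ← hf0]
  set e : (Fin n → Bool) → ℝ := fun x =>
    if x = f0 then (1/2) * (1+s)^2 else (1/2) * s^2 with he
  have hde : ∀ x, d x ^ 2 = e x := by
    intro x
    by_cases hx : x = f0 <;> simp only [hd, he, hx, if_true, if_false] <;>
      rw [mul_pow, hc2] <;> simp [hx]
  have hMM : M * Mᴴ = Matrix.diagonal (fun x => ((e x : ℝ) : ℂ)) := by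
    rw [hM, Matrix.diagonal_conjTranspose, Matrix.diagonal_mul_diagonal]
    refine congrArg Matrix.diagonal (funext fun x => ?_)
    show ((d x : ℂ)) * star ((d x : ℂ)) = ((e x : ℂ))
    rw [Complex.star_def, Complex.conj_ofReal, ← Complex.ofReal_mul, ← hde x, sq]
  set hH := Matrix.isHermitian_mul_conjTranspose_self M with hHdef
  have hrange : Set.range hH.eigenvalues = Set.range e := by
    rw [← Matrix.IsHermitian.spectrum_real_eq_range_eigenvalues hH]
    ext x
    rw [← spectrum.algebraMap_mem_iff ℂ, hMM, spectrum_diagonal]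
    rw [show (algebraMap ℝ ℂ) x = ((x : ℝ) : ℂ) from rfl]
    constructor
    · rintro ⟨i, hi⟩
      exact ⟨i, Complex.ofReal_inj.mp hi⟩
    · rintro ⟨i, hi⟩
      exact ⟨i, Complex.ofReal_inj.mpr hi⟩
  have hub : ∀ i, hH.eigenvalues i ≤ (1/2)*(1+s)^2 := by
    intro i
    have hm : hH.eigenvalues i ∈ Set.range e := hrange ▸ Set.mem_range_self i
    obtain ⟨x, hx⟩ := hm
    rw [← hx]
    by_cases h : x = f0
    · simp [he, h]
    · simp only [he, if_neg h]
      nlinarith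
  have hmem : ∃ i, hH.eigenvalues i = (1/2)*(1+s)^2 := by
    have hm : (1/2)*(1+s)^2 ∈ Set.range hH.eigenvalues := by
      rw [hrange]
      exact ⟨f0, by simp [he]⟩
    exact hm
  refine ⟨?_, ?_, ?_⟩
  · obtain ⟨i₀, hi₀⟩ := hmem
    refine le_antisymm (ciSup_le hub) ?_
    rw [← hi₀]
    exact le_ciSup (Set.Finite.bddAbove (Set.finite_range _)) i₀
  · rw [hMM, Matrix.rank_diagonal]
    have hall : ∀ i : Fin n → Bool, ((e i : ℝ) : ℂ) ≠ 0 := by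
      intro i
      rw [Complex.ofReal_ne_zero]
      by_cases h : i = f0 <;> simp only [he, h, if_true, if_false] <;> positivity
    rw [Fintype.card_congr (Equiv.subtypeUnivEquiv hall)]
    simp
  · have ha : (1:ℝ)/2 ≤ (1/2)*(1+s)^2 := by nlinarith
    have hp : (0:ℝ) < (2:ℝ)^n := by positivity
    have h1 : Real.logb 2 ((2:ℝ)^n * (1/2)) ≤ Real.logb 2 ((2:ℝ)^n * ((1/2)*(1+s)^2)) := by
      apply Real.logb_le_logb_of_le (by norm_num) (by positivity)
      nlinarith
    have h2 : Real.logb 2 ((2:ℝ)^n * (1/2)) = (n:ℝ) - 1 := by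
      rw [Real.logb_mul (by positivity) (by norm_num), Real.logb_pow]
      simp [Real.logb_self_eq_one]
      ring
    linarith
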